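/- Let ū_h ∈ U, ȳ_h ∈ Y, and w̄_h ∈ W be such that αū_h is a subgradient of the norm ‖·‖_X at B*w̄_h (variational discretization); set ρ_y := Aȳ_h − Bū_h ∈ W* and D := (ζ̂ − αū_h)(B*(ŵ − w̄_h)), where ζ̂ is any subgradient of ‖·‖_X at B*ŵ. Then ‖Cȳ_h − Cȳ‖_G² ≤ (4/α)D + 4‖C(A⁻¹ρ_y)‖_G². -/

import Mathlib

open RealInnerProductSpace NormedSpace

set_option maxHeartbeats 1000000 in
/-- A posteriori error estimate for Ivanov regularization under variational
discretization: the subgradient residual vanishes and only the Bregman term remains. -/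
theorem stmt_11
    {X G Y W : Type*}
    [NormedAddCommGroup X] [NormedSpace ℝ X] [CompleteSpace X]
    [NormedAddCommGroup G] [InnerProductSpace ℝ G] [CompleteSpace G]
    [NormedAddCommGroup Y] [NormedSpace ℝ Y] [CompleteSpace Y]
    [NormedAddCommGroup W] [NormedSpace ℝ W] [CompleteSpace W]
    (A : Y ≃L[ℝ] StrongDual ℝ W) (Astar : W ≃L[ℝ] StrongDual ℝ Y)
    (hAadj : ∀ (y : Y) (w : W), A y w = Astar w y)
    (Bstar : W →L[ℝ] X) (B : StrongDual ℝ X →L[ℝ] StrongDual ℝ W)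
    (hB : ∀ (u : StrongDual ℝ X) (w : W), B u w = u (Bstar w))
    (C : Y →L[ℝ] G) (Cstar : G →L[ℝ] StrongDual ℝ Y)
    (hCadj : ∀ (y : Y) (g : G), ⟪C y, g⟫ = Cstar g y)
    (gδ : G) (α : ℝ) (hα : 0 < α)
    (ubar : StrongDual ℝ X) (ybar : Y)
    (hubar : ‖ubar‖ ≤ 1/α) (hybar : ybar = A.symm (B ubar))
    (hmin : ∀ u : StrongDual ℝ X, ‖u‖ ≤ 1/α →
      (1/2) * ‖C ybar - gδ‖^2 ≤ (1/2) * ‖C (A.symm (B u)) - gδ‖^2)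
    (yh : Y) (what : W)
    (hwhat : what = Astar.symm (-(Cstar (C yh - gδ))))
    (uh : StrongDual ℝ X) (wh : W)
    (hvar : ∀ x : X, (α • uh) x - (α • uh) (Bstar wh) ≤ ‖x‖ - ‖Bstar wh‖)
    (ζhat : StrongDual ℝ X)
    (hζhat : ∀ x : X, ζhat x - ζhat (Bstar what) ≤ ‖x‖ - ‖Bstar what‖) :
    ‖C yh - C ybar‖^2 ≤
      (4/α) * ((ζhat - α • uh) (Bstar (what - wh)))
      + 4 * ‖C (A.symm (A yh - B uh))‖^2 := by
  have hαne : α ≠ 0 := ne_of_gt hα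
  set r : Y := A.symm (A yh - B uh) with hrdef
  have hr : A r = A yh - B uh := A.apply_symm_apply _
  -- subgradient equality for α•uh at Bstar wh
  have huh_eq : α * uh (Bstar wh) = ‖Bstar wh‖ := by
    have h1 := hvar 0
    have h2 := hvar ((2:ℝ) • (Bstar wh))
    simp only [ContinuousLinearMap.smul_apply, map_zero, norm_zero, map_smul,
      smul_eq_mul, norm_smul, Real.norm_ofNat, mul_zero] at h1 h2
    linarith
  -- ζhat equality
  have hζ_eq : ζhat (Bstar what) = ‖Bstar what‖ := by
    have h1 := hζhat 0
    have h2 := hζhat ((2:ℝ) • (Bstar what))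
    simp only [map_zero, norm_zero, map_smul, smul_eq_mul, norm_smul,
      Real.norm_ofNat] at h1 h2
    linarith
  -- bounds
  have huh_le : ∀ x : X, α * uh x ≤ ‖x‖ := by
    intro x
    have := hvar x
    simp only [ContinuousLinearMap.smul_apply, smul_eq_mul] at this
    linarith [huh_eq]
  have hζ_le : ∀ x : X, ζhat x ≤ ‖x‖ := by
    intro x
    have := hζhat x
    linarith [hζ_eq]
  have huh_norm : ‖uh‖ ≤ 1 / α := by
    have h1 : ‖α • uh‖ ≤ 1 := by
      refine ContinuousLinearMap.opNorm_le_bound _ one_pos.le (fun x => ?_)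
      rw [one_mul, ContinuousLinearMap.smul_apply, smul_eq_mul, Real.norm_eq_abs,
        abs_le]
      constructor
      · have := huh_le (-x); simp only [map_neg, norm_neg, mul_neg] at this; linarith
      · exact huh_le x
    have : ‖α • uh‖ = α * ‖uh‖ := by
      rw [norm_smul, Real.norm_eq_abs, abs_of_pos hα]
    rw [this] at h1
    rw [le_div_iff₀ hα]
    linarith
  -- adjoint identity
  have hAdj : ∀ y : Y, ⟪C yh - gδ, C y⟫ = -(A y what) := by
    intro y
    have h1 : Astar what = -(Cstar (C yh - gδ)) := by rw [hwhat]; exact Astar.apply_symm_apply _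
    rw [real_inner_comm, hCadj, hAadj, h1]
    simp
  -- splitting of yh
  have hyh_split : yh = A.symm (B uh) + r := by
    apply A.injective
    rw [map_add, A.apply_symm_apply, hr]
    abel
  -- key evaluation identities
  have hCyh_inner : ⟪C yh - gδ, C yh⟫ = -(uh (Bstar what)) + ⟪C yh - gδ, C r⟫ := by
    have h1 := hAdj yh
    have h2 := hAdj r
    rw [hr] at h2
    have h3 : A yh what = B uh what + (A yh - B uh) what := by
      simp [ContinuousLinearMap.sub_apply]
    rw [h1, h3, hB]
    linarith
  have hCybar_inner : ⟪C yh - gδ, C ybar⟫ = -(ubar (Bstar what)) := by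
    have h1 := hAdj ybar
    have h2 : A ybar = B ubar := by rw [hybar]; exact A.apply_symm_apply _
    rw [h1, h2, hB]
  -- variational inequality from minimality
  have hVI : 0 ≤ ⟪C ybar - gδ, C (A.symm (B uh)) - C ybar⟫ := by
    set d : G := C (A.symm (B uh)) - C ybar with hd
    by_contra hcon
    push_neg at hcon
    set ε : ℝ := -⟪C ybar - gδ, d⟫ with hε
    have hεpos : 0 < ε := by simp only [hε]; linarith
    set t : ℝ := min 1 (ε / (‖d‖^2 + 1)) with ht
    have ht0 : 0 < t := lt_min one_pos (div_pos hεpos (by positivity))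
    have ht1 : t ≤ 1 := min_le_left _ _
    have ht2 : t ≤ ε / (‖d‖^2 + 1) := min_le_right _ _
    -- feasibility
    have hfeas : ‖ubar + t • (uh - ubar)‖ ≤ 1/α := by
      have : ubar + t • (uh - ubar) = (1 - t) • ubar + t • uh := by
        module
      rw [this]
      calc ‖(1 - t) • ubar + t • uh‖ ≤ ‖(1 - t) • ubar‖ + ‖t • uh‖ := norm_add_le _ _
        _ = (1 - t) * ‖ubar‖ + t * ‖uh‖ := by
            rw [norm_smul, norm_smul, Real.norm_eq_abs, Real.norm_eq_abs,
              abs_of_nonneg (by linarith), abs_of_pos ht0]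
        _ ≤ (1 - t) * (1/α) + t * (1/α) := by
            have h1 : (0:ℝ) ≤ 1 - t := by linarith
            exact add_le_add (mul_le_mul_of_nonneg_left hubar h1)
              (mul_le_mul_of_nonneg_left huh_norm ht0.le)
        _ = 1/α := by ring
    have hm := hmin _ hfeas
    have hlin : C (A.symm (B (ubar + t • (uh - ubar)))) - gδ = (C ybar - gδ) + t • d := by
      simp only [map_add, map_smul, map_sub, hd, ← hybar, smul_sub]
      abel
    rw [hlin] at hm
    have hexp : ‖(C ybar - gδ) + t • d‖^2
        = ‖C ybar - gδ‖^2 + 2 * (t * ⟪C ybar - gδ, d⟫) + t^2 * ‖d‖^2 := by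
      rw [@norm_add_sq_real, real_inner_smul_right, norm_smul, Real.norm_eq_abs,
        abs_of_pos ht0, mul_pow]
    rw [hexp] at hm
    -- so 0 ≤ 2 t ⟪a,d⟫ + t² ‖d‖²
    have hkey : 0 ≤ 2 * ⟪C ybar - gδ, d⟫ + t * ‖d‖^2 := by
      have h0 : 0 ≤ 2 * (t * ⟪C ybar - gδ, d⟫) + t^2 * ‖d‖^2 := by linarith
      by_contra hneg
      push_neg at hneg
      nlinarith [mul_pos ht0 ht0]
    have hsmall : t * ‖d‖^2 < ε := by
      have h1 : t * (‖d‖^2 + 1) ≤ ε := by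
        rw [← le_div_iff₀ (by positivity)]; exact ht2
      nlinarith [ht0]
    rw [hε] at hsmall
    linarith
  -- D nonnegative
  have hD_nonneg : 0 ≤ (ζhat - α • uh) (Bstar (what - wh)) := by
    have h1 := hζhat (Bstar wh)
    have h2 := hvar (Bstar what)
    simp only [ContinuousLinearMap.smul_apply, smul_eq_mul] at h2
    simp only [map_sub, ContinuousLinearMap.sub_apply, ContinuousLinearMap.smul_apply,
      smul_eq_mul]
    linarith
  -- key inequality 1
  have hkey1 : ⟪C yh - gδ, C yh - C ybar⟫
      ≤ (1/α) * ((ζhat - α • uh) (Bstar (what - wh))) + ⟪C yh - gδ, C r⟫ := by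
    have hsplit : ⟪C yh - gδ, C yh - C ybar⟫
        = ubar (Bstar what) - uh (Bstar what) + ⟪C yh - gδ, C r⟫ := by
      rw [inner_sub_right, hCyh_inner, hCybar_inner]; ring
    have hub : α * ubar (Bstar what) ≤ ‖Bstar what‖ := by
      have h1 : ubar (Bstar what) ≤ ‖ubar (Bstar what)‖ := le_abs_self _
      have h2 : ‖ubar (Bstar what)‖ ≤ ‖ubar‖ * ‖Bstar what‖ := ubar.le_opNorm _
      have h3 : ‖ubar‖ * ‖Bstar what‖ ≤ (1/α) * ‖Bstar what‖ :=
        mul_le_mul_of_nonneg_right hubar (norm_nonneg _)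
      have h4 : ubar (Bstar what) ≤ (1/α) * ‖Bstar what‖ := by
        calc ubar (Bstar what) ≤ ‖ubar (Bstar what)‖ := h1
          _ ≤ ‖ubar‖ * ‖Bstar what‖ := h2
          _ ≤ (1/α) * ‖Bstar what‖ := h3
      have := mul_le_mul_of_nonneg_left h4 hα.le
      calc α * ubar (Bstar what) ≤ α * ((1/α) * ‖Bstar what‖) := this
        _ = ‖Bstar what‖ := by field_simp
    have hζwh : ζhat (Bstar wh) ≤ ‖Bstar wh‖ := hζ_le _
    have hD : (ζhat - α • uh) (Bstar (what - wh))
        = ζhat (Bstar what) - ζhat (Bstar wh) - α * uh (Bstar what) + α * uh (Bstar wh) := by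
      simp only [map_sub, ContinuousLinearMap.sub_apply, ContinuousLinearMap.smul_apply,
        smul_eq_mul]
      ring
    rw [hsplit, hD]
    have hgoal : α * (ubar (Bstar what) - uh (Bstar what))
        ≤ ζhat (Bstar what) - ζhat (Bstar wh) - α * uh (Bstar what) + α * uh (Bstar wh) := by
      rw [hζ_eq]
      linarith [hub, huh_eq, hζwh]
    have h5 : ubar (Bstar what) - uh (Bstar what)
        ≤ (1/α) * (ζhat (Bstar what) - ζhat (Bstar wh) - α * uh (Bstar what) + α * uh (Bstar wh)) := by
      rw [one_div, ← div_eq_inv_mul, le_div_iff₀ hα]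
      nlinarith [hgoal]
    linarith
  -- key inequality 2
  have hkey2 : ⟪gδ - C ybar, C yh - C ybar⟫ ≤ ⟪gδ - C ybar, C r⟫ := by
    have h1 : C yh - C ybar = (C (A.symm (B uh)) - C ybar) + C r := by
      rw [hyh_split, map_add]; abel
    rw [h1, inner_add_right]
    have h2 : ⟪gδ - C ybar, C (A.symm (B uh)) - C ybar⟫ ≤ 0 := by
      have : gδ - C ybar = -(C ybar - gδ) := by abel
      rw [this, inner_neg_left]
      linarith [hVI]
    linarith
  -- combine
  set e : G := C yh - C ybar with he
  have hsum : ‖e‖^2 ≤ (1/α) * ((ζhat - α • uh) (Bstar (what - wh))) + ⟪e, C r⟫ := by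
    have h1 : ⟪e, e⟫ = ⟪C yh - gδ, e⟫ + ⟪gδ - C ybar, e⟫ := by
      rw [← inner_add_left]
      congr 1
      rw [he]; abel
    have h2 : ‖e‖^2 = ⟪e, e⟫ := (real_inner_self_eq_norm_sq e).symm
    have h3 : ⟪C yh - gδ, C r⟫ + ⟪gδ - C ybar, C r⟫ = ⟪e, C r⟫ := by
      rw [← inner_add_left]
      congr 1
      rw [he]; abel
    rw [h2, h1]
    linarith [hkey1, hkey2]
  have hCS : ⟪e, C r⟫ ≤ (1/2) * ‖e‖^2 + (1/2) * ‖C r‖^2 := by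
    have h1 : ⟪e, C r⟫ ≤ ‖e‖ * ‖C r‖ := real_inner_le_norm _ _
    nlinarith [sq_nonneg (‖e‖ - ‖C r‖)]
  have hfinal : ‖e‖^2 ≤ 2 * ((1/α) * ((ζhat - α • uh) (Bstar (what - wh)))) + ‖C r‖^2 := by
    linarith [hsum, hCS]
  have h24 : 2 * ((1/α) * ((ζhat - α • uh) (Bstar (what - wh))))
      ≤ (4/α) * ((ζhat - α • uh) (Bstar (what - wh))) := by
    have : (4:ℝ)/α = 2 * (2 * (1/α)) := by ring
    rw [this, mul_assoc]
    have h2 : (0:ℝ) ≤ (1/α) * ((ζhat - α • uh) (Bstar (what - wh))) := by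
      exact mul_nonneg (by positivity) hD_nonneg
    linarith
  have hCr : ‖C r‖^2 ≤ 4 * ‖C r‖^2 := by nlinarith [sq_nonneg ‖C r‖]
  calc ‖e‖^2 ≤ 2 * ((1/α) * ((ζhat - α • uh) (Bstar (what - wh)))) + ‖C r‖^2 := hfinal
    _ ≤ (4/α) * ((ζhat - α • uh) (Bstar (what - wh))) + 4 * ‖C r‖^2 := by linarith
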